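/- Let f(w) = (w, w², ..., wⁿ) ∈ ℂⁿ. For any set of at most 2n+1 distinct unit complex numbers w₁,...,w_m, the vectors f(w₁),...,f(w_m) are affinely independent over ℝ in ℂⁿ viewed as a real vector space; equivalently, if real numbers y₁,...,y_m satisfy Σⱼ yⱼ = 0 and Σⱼ yⱼ f(wⱼ) = 0 then all yⱼ = 0. -/

import Mathlib

/-- The vector `f(w) = (w, w², ..., wⁿ) ∈ ℂⁿ`. -/
def fvec (n : ℕ) (w : ℂ) : Fin n → ℂ := fun k => w ^ ((k : ℕ) + 1)

theorem fvec_affinely_independent {n m : ℕ} (hm : m ≤ 2 * n + 1)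
    (w : Fin m → ℂ) (hw : ∀ j, ‖w j‖ = 1) (hinj : Function.Injective w)
    (y : Fin m → ℝ) (hsum : ∑ j, y j = 0)
    (hcomb : ∑ j, y j • fvec n (w j) = 0) :
    y = 0 := by
  -- unit modulus: conj (w j) * w j = 1
  have hunit : ∀ j, (starRingEnd ℂ) (w j) * w j = 1 := by
    intro j
    rw [mul_comm, Complex.mul_conj]
    have : Complex.normSq (w j) = 1 := by
      rw [Complex.normSq_eq_norm_sq, hw j]; norm_num
    rw [this]; norm_num
  -- power sums vanish for 0 ≤ k ≤ n
  have hpow : ∀ k ≤ n, ∑ j, (y j : ℂ) * w j ^ k = 0 := by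
    intro k hk
    rcases Nat.eq_zero_or_pos k with rfl | hk0
    · simp only [pow_zero, mul_one]
      rw [← Complex.ofReal_sum, hsum, Complex.ofReal_zero]
    · have hk1 : k - 1 < n := by omega
      have := congrFun hcomb ⟨k - 1, hk1⟩
      simpa [fvec, Nat.sub_add_cancel hk0] using this
  -- conjugate power sums vanish too
  have hconj : ∀ k ≤ n, ∑ j, (y j : ℂ) * ((starRingEnd ℂ) (w j)) ^ k = 0 := by
    intro k hk
    have := congrArg (starRingEnd ℂ) (hpow k hk)
    simpa using this
  set z : Fin m → ℂ := fun j => (y j : ℂ) * ((starRingEnd ℂ) (w j)) ^ n with hz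
  have hzero : z = 0 := by
    apply Matrix.eq_zero_of_forall_pow_sum_mul_pow_eq_zero hinj
    intro i
    have hi2n : (i : ℕ) ≤ 2 * n := by omega
    by_cases hcase : (i : ℕ) ≤ n
    · -- z j * w j ^ i = y j * conj (w j) ^ (n - i)
      have key : ∀ j, z j * w j ^ (i : ℕ) = (y j : ℂ) * ((starRingEnd ℂ) (w j)) ^ (n - (i : ℕ)) := by
        intro j
        have : ((starRingEnd ℂ) (w j)) ^ n = ((starRingEnd ℂ) (w j)) ^ (n - (i : ℕ)) * ((starRingEnd ℂ) (w j)) ^ (i : ℕ) := by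
          rw [← pow_add, Nat.sub_add_cancel hcase]
        rw [hz]
        simp only
        rw [this, mul_assoc, mul_assoc, ← mul_pow, hunit j, one_pow, mul_one]
      calc ∑ j, z j * w j ^ (i : ℕ)
          = ∑ j, (y j : ℂ) * ((starRingEnd ℂ) (w j)) ^ (n - (i : ℕ)) := by
            exact Finset.sum_congr rfl fun j _ => key j
        _ = 0 := hconj _ (Nat.sub_le _ _)
    · push_neg at hcase
      have hin : n ≤ (i : ℕ) := hcase.le
      have key : ∀ j, z j * w j ^ (i : ℕ) = (y j : ℂ) * w j ^ ((i : ℕ) - n) := by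
        intro j
        have : (w j) ^ (i : ℕ) = (w j) ^ n * (w j) ^ ((i : ℕ) - n) := by
          rw [← pow_add, Nat.add_sub_cancel' hin]
        rw [hz]
        simp only
        rw [this, mul_assoc, ← mul_assoc (((starRingEnd ℂ) (w j)) ^ n), ← mul_pow, hunit j,
          one_pow, one_mul]
      calc ∑ j, z j * w j ^ (i : ℕ)
          = ∑ j, (y j : ℂ) * w j ^ ((i : ℕ) - n) := Finset.sum_congr rfl fun j _ => key j
        _ = 0 := hpow _ (by omega)
  funext j
  have hzj := congrFun hzero j
  have hconjne : ((starRingEnd ℂ) (w j)) ^ n ≠ 0 := by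
    apply pow_ne_zero
    intro h
    have := hunit j
    rw [h, zero_mul] at this
    exact one_ne_zero this.symm
  rw [hz] at hzj
  simp only [Pi.zero_apply, mul_eq_zero] at hzj
  rcases hzj with h | h
  · exact_mod_cast h
  · exact absurd h hconjne
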